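/- Suppose S, P : [0,∞) → ℝ are continuous and converge to S₃ > 0 and P₃ ≥ 0 respectively as t → ∞, and I : [0,∞) → ℝ is a nonnegative differentiable function satisfying I'(t) = (-a₁ + e₀S(t) - d₁P(t)) I(t). If a₁ > e₀S₃ - d₁P₃, then I(t) → 0 as t → ∞. -/

import Mathlib

open Filter Topology

theorem infected_prey_extinction
    (a1 e0 d1 S3 P3 : ℝ) (ha1 : 0 < a1) (he0 : 0 < e0) (hd1 : 0 < d1)
    (hS3 : 0 < S3) (hP3 : 0 ≤ P3)
    (S P I : ℝ → ℝ)
    (hScont : ContinuousOn S (Set.Ici 0)) (hPcont : ContinuousOn P (Set.Ici 0))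
    (hSlim : Tendsto S atTop (𝓝 S3)) (hPlim : Tendsto P atTop (𝓝 P3))
    (hId : Differentiable ℝ I) (hInn : ∀ t ≥ (0:ℝ), 0 ≤ I t)
    (hIeq : ∀ t ≥ (0:ℝ), deriv I t = (-a1 + e0 * S t - d1 * P t) * I t)
    (hthr : e0 * S3 - d1 * P3 < a1) :
    Tendsto I atTop (𝓝 0) := by
  set L : ℝ := -a1 + e0 * S3 - d1 * P3 with hLdef
  have hLneg : L < 0 := by simp only [hLdef]; linarith
  set δ : ℝ := -L / 2 with hδdef
  have hδpos : 0 < δ := by simp only [hδdef]; linarith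
  have hflim : Tendsto (fun t => -a1 + e0 * S t - d1 * P t) atTop (𝓝 L) := by
    have h1 : Tendsto (fun t => e0 * S t - d1 * P t) atTop (𝓝 (e0 * S3 - d1 * P3)) :=
      (hSlim.const_mul e0).sub (hPlim.const_mul d1)
    have h2 : Tendsto (fun _ : ℝ => -a1) atTop (𝓝 (-a1)) := tendsto_const_nhds
    have h3 := h2.add h1
    simpa [hLdef, add_sub_assoc] using h3
  have hev : ∀ᶠ t in atTop, -a1 + e0 * S t - d1 * P t < -δ := by
    apply hflim.eventually_lt_const
    simp only [hδdef]; linarith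
  obtain ⟨t0, ht0⟩ := eventually_atTop.mp hev
  set t1 : ℝ := max t0 0 with ht1def
  have ht1nn : (0:ℝ) ≤ t1 := le_max_right _ _
  set g : ℝ → ℝ := fun t => I t * Real.exp (δ * t) with hgdef
  have hgd : ∀ t, HasDerivAt g
      ((-a1 + e0 * S t - d1 * P t + δ) * I t * Real.exp (δ * t)) t ∨ True := fun _ => Or.inr trivial
  have hgderiv : ∀ t ≥ t1, HasDerivAt g
      (((-a1 + e0 * S t - d1 * P t) + δ) * (I t * Real.exp (δ * t))) t := by
    intro t ht
    have htnn : (0:ℝ) ≤ t := le_trans ht1nn ht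
    have he : HasDerivAt (fun t => Real.exp (δ * t)) (Real.exp (δ * t) * δ) t := by
      simpa using ((hasDerivAt_id t).const_mul δ).exp
    have hI : HasDerivAt I ((-a1 + e0 * S t - d1 * P t) * I t) t := by
      have := (hId t).hasDerivAt
      rwa [hIeq t htnn] at this
    have := hI.mul he
    exact this.congr_deriv (by ring)
  have hgdiff : Differentiable ℝ g :=
    hId.mul ((differentiable_id.const_mul δ).exp)
  have hanti : AntitoneOn g (Set.Ici t1) := by
    apply antitoneOn_of_deriv_nonpos (convex_Ici t1) hgdiff.continuous.continuousOn
      hgdiff.differentiableOn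
    intro x hx
    rw [interior_Ici] at hx
    have hx' : t1 ≤ x := le_of_lt hx
    rw [(hgderiv x hx').deriv]
    have hc : -a1 + e0 * S x - d1 * P x + δ ≤ 0 := by
      have := ht0 x (le_trans (le_max_left _ _) hx')
      linarith
    have hI0 : 0 ≤ I x := hInn x (le_trans ht1nn hx')
    have : 0 ≤ I x * Real.exp (δ * x) := mul_nonneg hI0 (Real.exp_pos _).le
    exact mul_nonpos_of_nonpos_of_nonneg hc this
  have hub : ∀ t ≥ t1, I t ≤ g t1 * Real.exp (-(δ * t)) := by
    intro t ht
    have := hanti (Set.self_mem_Ici) (Set.mem_Ici.mpr ht) ht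
    have h2 : I t * Real.exp (δ * t) ≤ g t1 := this
    have hexp : (0:ℝ) < Real.exp (δ * t) := Real.exp_pos _
    rw [Real.exp_neg]
    rw [← le_div_iff₀ hexp] at h2
    simpa [div_eq_mul_inv] using h2
  have hexplim : Tendsto (fun t => g t1 * Real.exp (-(δ * t))) atTop (𝓝 0) := by
    have h1 : Tendsto (fun t : ℝ => δ * t) atTop atTop :=
      tendsto_id.const_mul_atTop hδpos
    have h2 : Tendsto (fun t : ℝ => -(δ * t)) atTop atBot :=
      tendsto_neg_atBot_iff.mpr h1
    have h3 : Tendsto (fun t : ℝ => Real.exp (-(δ * t))) atTop (𝓝 0) :=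
      Real.tendsto_exp_atBot.comp h2
    simpa using tendsto_const_nhds.mul h3
  apply tendsto_of_tendsto_of_tendsto_of_le_of_le' tendsto_const_nhds hexplim
  · filter_upwards [eventually_ge_atTop (0:ℝ)] with t ht using hInn t ht
  · filter_upwards [eventually_ge_atTop t1] with t ht using hub t ht
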